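/- arXiv:1806.06243 — 3 statements merged into one kernel-verified Lean document; each statement's English description precedes it below -/
import Mathlib

section
/- Let ι be a nonempty index set and A, B : ι → ℝ. Assume there exist constants m, M with 0 < m ≤ B i ≤ M for all i, and that the set {A i / B i : i ∈ ι} is bounded below. Define p_opt = ⨅_{i} A i / B i and, for c ∈ ℝ, h(c) = ⨅_{i} (A i − c · B i). Then: (i) p_opt ≥ c if and only if h(c) ≥ 0; (ii) p_opt ≤ c if and only if h(c) ≤ 0; and consequently (iii) p_opt = c if and only if h(c) = 0, and p_opt > c if and only if h(c) > 0, and p_opt < c if and only if h(c) < 0. -/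
theorem dinkelbach_sign_equivalences
    {ι : Type*} [Nonempty ι] (A B : ι → ℝ) (m M : ℝ)
    (hm : 0 < m) (hB : ∀ i, m ≤ B i ∧ B i ≤ M)
    (hbdd : BddBelow (Set.range fun i => A i / B i)) (c : ℝ) :
    ((⨅ i, A i / B i) ≥ c ↔ (⨅ i, (A i - c * B i)) ≥ 0) ∧
    ((⨅ i, A i / B i) ≤ c ↔ (⨅ i, (A i - c * B i)) ≤ 0) ∧
    ((⨅ i, A i / B i) = c ↔ (⨅ i, (A i - c * B i)) = 0) ∧
    ((⨅ i, A i / B i) > c ↔ (⨅ i, (A i - c * B i)) > 0) ∧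
    ((⨅ i, A i / B i) < c ↔ (⨅ i, (A i - c * B i)) < 0) := by
  have hBpos : ∀ i, 0 < B i := fun i => lt_of_lt_of_le hm (hB i).1
  have hmM : m ≤ M := le_trans (hB (Classical.arbitrary ι)).1 (hB (Classical.arbitrary ι)).2
  obtain ⟨L, hL⟩ := hbdd
  have hLi : ∀ i, L ≤ A i / B i := fun i => hL (Set.mem_range_self i)
  have hbdd2 : BddBelow (Set.range fun i => A i - c * B i) := by
    refine ⟨min ((L - c) * m) ((L - c) * M), ?_⟩
    rintro x ⟨i, rfl⟩
    show min ((L - c) * m) ((L - c) * M) ≤ A i - c * B i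
    have h1 : L * B i ≤ A i := (le_div_iff₀ (hBpos i)).mp (hLi i)
    rcases le_or_gt 0 (L - c) with h | h
    · have : (L - c) * m ≤ (L - c) * B i := mul_le_mul_of_nonneg_left (hB i).1 h
      have := min_le_left ((L - c) * m) ((L - c) * M)
      nlinarith
    · have : (L - c) * M ≤ (L - c) * B i := by nlinarith [(hB i).2]
      have := min_le_right ((L - c) * m) ((L - c) * M)
      nlinarith
  have hbdd' : BddBelow (Set.range fun i => A i / B i) := ⟨L, hL⟩
  -- (i)
  have h1 : (⨅ i, A i / B i) ≥ c ↔ (⨅ i, (A i - c * B i)) ≥ 0 := by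
    constructor
    · intro h
      refine le_ciInf fun i => ?_
      have : c ≤ A i / B i := le_trans h (ciInf_le hbdd' i)
      have := (le_div_iff₀ (hBpos i)).mp this
      linarith
    · intro h
      refine le_ciInf fun i => ?_
      have : (0:ℝ) ≤ A i - c * B i := le_trans h (ciInf_le hbdd2 i)
      rw [le_div_iff₀ (hBpos i)]
      linarith
  -- (ii)
  have h2 : (⨅ i, A i / B i) ≤ c ↔ (⨅ i, (A i - c * B i)) ≤ 0 := by
    constructor
    · intro h
      by_contra hc
      push_neg at hc
      set ε := (⨅ i, (A i - c * B i)) with hε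
      have hεpos : 0 < ε := hc
      have hM : 0 < M := lt_of_lt_of_le hm hmM
      have hεM : 0 < ε / (2 * M) := by positivity
      have : (⨅ i, A i / B i) < c + ε / (2 * M) := lt_of_le_of_lt h (by linarith)
      obtain ⟨i, hi⟩ := exists_lt_of_ciInf_lt this
      have hBi := hBpos i
      have hAi : A i < (c + ε / (2 * M)) * B i := (div_lt_iff₀ hBi).mp hi
      have hle : ε ≤ A i - c * B i := ciInf_le hbdd2 i
      have hBM : B i ≤ M := (hB i).2
      have : ε / (2 * M) * B i ≤ ε / 2 := by
        rw [div_mul_eq_mul_div, div_le_div_iff₀ (by positivity) (by norm_num)]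
        nlinarith
      nlinarith
    · intro h
      by_contra hc
      push_neg at hc
      set δ := (⨅ i, A i / B i) - c with hδ
      have hδpos : 0 < δ := by simp [hδ]; linarith
      have : (⨅ i, (A i - c * B i)) < δ * m := lt_of_le_of_lt h (mul_pos hδpos hm)
      obtain ⟨i, hi⟩ := exists_lt_of_ciInf_lt this
      have hle : (⨅ i, A i / B i) ≤ A i / B i := ciInf_le hbdd' i
      have hBi := hBpos i
      have hcd : c + δ = ⨅ i, A i / B i := by rw [hδ]; ring
      have : (c + δ) * B i ≤ A i := by
        rw [hcd]; exact (le_div_iff₀ hBi).mp hle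
      nlinarith [(hB i).1]
  refine ⟨h1, h2, ?_, ?_, ?_⟩
  · constructor
    · intro h; exact le_antisymm (h2.mp h.le) (h1.mp h.ge)
    · intro h; exact le_antisymm (h2.mpr h.le) (h1.mpr h.ge)
  · constructor
    · intro h
      rcases lt_or_ge 0 (⨅ i, (A i - c * B i)) with h' | h'
      · exact h'
      · exact absurd (h2.mpr h') (not_le.mpr h)
    · intro h
      rcases lt_or_ge c (⨅ i, A i / B i) with h' | h'
      · exact h'
      · exact absurd (h1.mpr h.le) (not_le.mpr (lt_of_le_of_ne h' (fun he => by
          have := le_antisymm (h2.mp he.le) (h1.mp he.ge); linarith)))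
  · constructor
    · intro h
      rcases lt_or_ge (⨅ i, (A i - c * B i)) 0 with h' | h'
      · exact h'
      · exact absurd (h1.mpr h') (not_le.mpr h)
    · intro h
      rcases lt_or_ge (⨅ i, A i / B i) c with h' | h'
      · exact h'
      · exact absurd (h1.mp h') (not_le.mpr h)
end

section
/- Let ι be a nonempty index set and A, B : ι → ℝ with 0 < m ≤ B i ≤ M for all i (for some constants m, M) and with {A i / B i : i ∈ ι} bounded below. Define p_opt = ⨅_{i} A i / B i and h(c) = ⨅_{i} (A i − c · B i) for c ∈ ℝ. If h(c) = 0, then c = p_opt, and for every i ∈ ι one has A i / B i = p_opt if and only if A i − c · B i = 0; in other words, the minimizers of the ratio problem inf_i A i / B i coincide with the minimizers of the parametrized problem inf_i (A i − c·B i). -/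
theorem dinkelbach_solution_sets_coincide
    {ι : Type*} [Nonempty ι] (A B : ι → ℝ) (m M : ℝ)
    (hm : 0 < m) (hB : ∀ i, m ≤ B i ∧ B i ≤ M)
    (hbdd : BddBelow (Set.range fun i => A i / B i))
    (c : ℝ) (hc : (⨅ i, (A i - c * B i)) = 0) :
    c = (⨅ i, A i / B i) ∧
      ∀ i, A i / B i = (⨅ j, A j / B j) ↔ A i - c * B i = 0 := by
  have hBpos : ∀ i, 0 < B i := fun i => hm.trans_le (hB i).1
  obtain ⟨b, hb⟩ := hbdd
  have hb' : ∀ i, b ≤ A i / B i := fun i => hb (Set.mem_range_self i)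
  have key : ∀ i, A i - c * B i = (A i / B i - c) * B i := by
    intro i
    rw [sub_mul, div_mul_cancel₀ _ (hBpos i).ne']
  have hbdd2 : BddBelow (Set.range fun i => A i - c * B i) := by
    refine ⟨-(|b - c| * M), ?_⟩
    rintro _ ⟨i, rfl⟩
    show -(|b - c| * M) ≤ A i - c * B i
    rw [key i]
    have h1 : -|b - c| ≤ A i / B i - c := by
      have := hb' i
      have : b - c ≤ A i / B i - c := by linarith
      linarith [neg_abs_le (b - c)]
    calc -(|b - c| * M) = -|b - c| * M := by ring
      _ ≤ -|b - c| * B i := by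
          rcases le_or_gt 0 (-|b - c|) with h | h
          · have : |b - c| = 0 := le_antisymm (by linarith) (abs_nonneg _)
            simp [this]
          · exact mul_le_mul_of_nonpos_left (hB i).2 h.le
      _ ≤ (A i / B i - c) * B i := mul_le_mul_of_nonneg_right h1 (hBpos i).le
  have hnn : ∀ i, 0 ≤ A i - c * B i := fun i => hc ▸ ciInf_le hbdd2 i
  have hle : ∀ i, c ≤ A i / B i := by
    intro i
    rw [le_div_iff₀ (hBpos i)]
    linarith [hnn i]
  have hcle : c ≤ ⨅ i, A i / B i := le_ciInf hle
  have hpec : (⨅ i, A i / B i) ≤ c := by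
    by_contra h
    push_neg at h
    set p := ⨅ i, A i / B i with hp
    have hlow : ∀ i, (p - c) * m ≤ A i - c * B i := by
      intro i
      rw [key i]
      have h1 : p - c ≤ A i / B i - c := by
        have := ciInf_le ⟨b, hb⟩ i
        linarith [this]
      have h2 : 0 < p - c := by linarith
      calc (p - c) * m ≤ (p - c) * B i := by
              exact mul_le_mul_of_nonneg_left (hB i).1 h2.le
        _ ≤ (A i / B i - c) * B i := mul_le_mul_of_nonneg_right h1 (hBpos i).le
    have := le_ciInf hlow
    rw [hc] at this
    nlinarith
  have hcp : c = ⨅ i, A i / B i := le_antisymm hcle hpec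
  refine ⟨hcp, fun i => ?_⟩
  constructor
  · intro h
    have : A i / B i = c := by rw [h, hcp]
    rw [div_eq_iff (hBpos i).ne'] at this
    linarith
  · intro h
    have : A i = c * B i := by linarith
    rw [this, mul_div_assoc, div_self (hBpos i).ne', mul_one, hcp]
end

section
/- Let p : ℕ → ℝ be non-decreasing, let β ∈ ℝ and y ∈ ℕ, and let ν be a finitely supported probability mass function on ℕ (the distribution of the next service time Y'). For z ∈ ℕ define G(z) = Σ_{k ∈ supp ν} ν(k) · ( Σ_{n=0}^{z+k−1} (p(n+y) − β) ), and define g(n) = Σ_{k ∈ supp ν} ν(k) · p(y + n + k) − β (the conditional expectation E[p(y + n + Y')] − β). Suppose there exists n ∈ ℕ with g(n) ≥ 0, and let z* = min{ n ∈ ℕ : g(n) ≥ 0 }. Then G(z*) ≤ G(z) for every z ∈ ℕ. -/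
theorem optimal_waiting_time_threshold
    (p : ℕ → ℝ) (hp : Monotone p) (β : ℝ) (y : ℕ)
    (ν : PMF ℕ) (hfin : ν.support.Finite)
    (G g : ℕ → ℝ)
    (hG : ∀ z : ℕ,
      G z = ∑' k : ℕ, (ν k).toReal * (∑ n ∈ Finset.range (z + k), (p (n + y) - β)))
    (hg : ∀ n : ℕ, g n = (∑' k : ℕ, (ν k).toReal * p (y + n + k)) - β)
    (zstar : ℕ) (hzstar : IsLeast {n : ℕ | 0 ≤ g n} zstar) :
    ∀ z : ℕ, G zstar ≤ G z := by
  set s : Finset ℕ := hfin.toFinset with hs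
  have hts : ∀ (c : ℕ → ℝ),
      (∑' k : ℕ, (ν k).toReal * c k) = ∑ k ∈ s, (ν k).toReal * c k := by
    intro c
    refine tsum_eq_sum ?_
    intro k hk
    have hk0 : ν k = 0 := by
      rwa [hs, Set.Finite.mem_toFinset, PMF.mem_support_iff, not_not] at hk
    simp [hk0]
  have hsum1 : ∑ k ∈ s, (ν k).toReal = 1 := by
    have h1 : (∑' k : ℕ, (ν k).toReal) = 1 := by
      rw [← ENNReal.tsum_toReal_eq (fun k => PMF.apply_ne_top ν k), ν.tsum_coe]
      simp
    have h2 := hts (fun _ => 1)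
    simp only [mul_one] at h2
    rw [← h2, h1]
  have key : ∀ z : ℕ, G (z + 1) = G z + g z := by
    intro z
    rw [hG, hG, hg, hts, hts, hts]
    have step : ∀ k ∈ s, (ν k).toReal * (∑ n ∈ Finset.range (z + 1 + k), (p (n + y) - β))
        = (ν k).toReal * (∑ n ∈ Finset.range (z + k), (p (n + y) - β))
          + ((ν k).toReal * p (y + z + k) - (ν k).toReal * β) := by
      intro k _
      rw [show z + 1 + k = (z + k) + 1 by omega, Finset.sum_range_succ,
        show z + k + y = y + z + k by omega]
      ring
    rw [Finset.sum_congr rfl step, Finset.sum_add_distrib, Finset.sum_sub_distrib,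
      ← Finset.sum_mul, hsum1, one_mul]
  have gmono : Monotone g := by
    intro a b hab
    rw [hg, hg]
    apply sub_le_sub_right
    rw [hts, hts]
    refine Finset.sum_le_sum fun k _ => ?_
    exact mul_le_mul_of_nonneg_left (hp (by omega)) ENNReal.toReal_nonneg
  have gpos : ∀ n, zstar ≤ n → 0 ≤ g n := fun n hn => le_trans hzstar.1 (gmono hn)
  have gneg : ∀ n, n < zstar → g n ≤ 0 := by
    intro n hn
    by_contra h
    push_neg at h
    exact absurd (hzstar.2 (le_of_lt h)) (by omega)
  -- upward: G zstar ≤ G (zstar + d)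
  have up : ∀ d : ℕ, G zstar ≤ G (zstar + d) := by
    intro d
    induction d with
    | zero => simp
    | succ d ih =>
      have := key (zstar + d)
      have h0 := gpos (zstar + d) (by omega)
      calc G zstar ≤ G (zstar + d) := ih
        _ ≤ G (zstar + d) + g (zstar + d) := by linarith
        _ = G (zstar + (d + 1)) := by rw [← key]; ring_nf
  -- downward: G zstar ≤ G (zstar - d)
  have down : ∀ d : ℕ, G zstar ≤ G (zstar - d) := by
    intro d
    induction d with
    | zero => simp
    | succ d ih =>
      by_cases hd : zstar ≤ d
      · rw [show zstar - (d + 1) = zstar - d by omega]; exact ih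
      · have h1 : zstar - (d + 1) + 1 = zstar - d := by omega
        have h2 : zstar - (d + 1) < zstar := by omega
        have hk := key (zstar - (d + 1))
        rw [h1] at hk
        have := gneg _ h2
        linarith
  intro z
  rcases le_or_gt zstar z with h | h
  · have := up (z - zstar)
    rwa [show zstar + (z - zstar) = z by omega] at this
  · have := down (zstar - z)
    rwa [show zstar - (zstar - z) = z by omega] at this
end
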